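/- Let S, T be open trees (trees with no stumps), and let ≤_lex be the relation on elementary subtrees of S ⊗ T generated by: V ≤_lex U whenever U is obtained from V by replacing, at some edge e = (s,t) with both s,t nodes, the pair of generating relations e^{↑S,T} ≤ e^{↑S} ≤ e occurring in V by the pair e^{↑S,T} ≤ e^{↑T} ≤ e occurring in U (grafted compatibly with the rest of the tree). Then ≤_lex is a partial order on the set of elementary subtrees of S ⊗ T, and the relation generated jointly by ≤_lex and subtree inclusion is also a partial order. -/

import Mathlib

universe u

namespace BroadPaper

/-- A broad relation on `X`: a relation between finite unordered tuples
(multisets) over `X` and elements of `X`. -/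
abbrev Rel (X : Type u) : Type u := Multiset X → X → Prop

variable {X : Type u} {Y : Type u} {A : Type u} {B : Type u} {Z : Type u}

/-- Broad transitivity: if `f₁ ⋯ fₙ ≤ e` and `g̲ᵢ ≤ fᵢ` then `g̲₁ ⋯ g̲ₙ ≤ e`,
encoded via a multiset of pairs `(g̲ᵢ, fᵢ)`. -/
def BTrans (r : Rel X) : Prop :=
  ∀ (p : Multiset (Multiset X × X)) (e : X),
    r (p.map Prod.snd) e → (∀ q ∈ p, r q.1 q.2) → r ((p.map Prod.fst).sum) e

/-- A pre-broad poset: reflexivity plus broad transitivity. -/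
def IsPreBroad (r : Rel X) : Prop := (∀ e : X, r {e} e) ∧ BTrans r

/-- A (commutative) broad poset: a pre-broad poset satisfying antisymmetry. -/
def IsBroad (r : Rel X) : Prop :=
  IsPreBroad r ∧ ∀ e f : X, r {e} f → r {f} e → e = f

/-- Simplicity: letters in any broad relation are pairwise distinct. -/
def Simple (r : Rel X) : Prop := ∀ fs e, r fs e → fs.Nodup

/-- The descendant relation `f ≤_d e`. -/
def descends (r : Rel X) (f e : X) : Prop := ∃ fs, r fs e ∧ f ∈ fs

def Comparable (r : Rel X) (f g : X) : Prop := descends r f g ∨ descends r g f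

def Incomp (r : Rel X) (f g : X) : Prop := ¬ descends r f g ∧ ¬ descends r g f

/-- Blockwise extension of a broad relation to a relation between tuples:
`fs ≤ es` iff `fs = f̲₁ ⋯ f̲ₖ`, `es = e₁ ⋯ eₖ` with `f̲ᵢ ≤ eᵢ`. -/
def tupleLE (r : Rel X) (fs es : Multiset X) : Prop :=
  ∃ p : Multiset (Multiset X × X),
    p.map Prod.snd = es ∧ (p.map Prod.fst).sum = fs ∧ ∀ q ∈ p, r q.1 q.2

/-- A leaf: no tuple strictly below `e`. -/
def IsLeaf (r : Rel X) (e : X) : Prop := ¬ ∃ fs, r fs e ∧ fs ≠ ({e} : Multiset X)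

/-- `fs` is the maximum tuple strictly below `e` (written `e^↑`).
If `fs ≠ 0`, `e` is a node; if `fs = 0`, `e` is a stump. -/
def upTuple (r : Rel X) (e : X) (fs : Multiset X) : Prop :=
  (r fs e ∧ fs ≠ ({e} : Multiset X)) ∧
    ∀ gs, r gs e → gs ≠ ({e} : Multiset X) → tupleLE r gs fs

def IsStump (r : Rel X) (e : X) : Prop := upTuple r e 0

/-- A dendroidally ordered set (tree): a finite simple broad poset in which
every element is a leaf, node or stump, with a `≤_d`-maximum (root). -/
def IsTree (r : Rel X) : Prop :=
  IsBroad r ∧ Finite X ∧ Simple r ∧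
    (∀ e : X, IsLeaf r e ∨ ∃ fs, upTuple r e fs) ∧
    ∃ rt : X, ∀ e, descends r e rt

def IsMaxEl (r : Rel X) (e : X) : Prop := ∀ s, descends r e s → s = e

/-- A forestially ordered set (forest): each element has a unique
`≤_d`-maximal element above it. -/
def IsForest (r : Rel X) : Prop :=
  IsBroad r ∧ Finite X ∧ Simple r ∧
    (∀ e : X, IsLeaf r e ∨ ∃ fs, upTuple r e fs) ∧
    ∀ e : X, ∃! rt : X, IsMaxEl r rt ∧ descends r e rt

/-- A map of broad posets: preserves broad relations (letterwise on tuples). -/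
def BroadHom (r : Rel X) (r' : Rel Y) (φ : X → Y) : Prop :=
  ∀ fs e, r fs e → r' (fs.map φ) (φ e)

/-- `rs` is the root tuple: the tuple of `≤_d`-maximal elements (no repeats). -/
def IsRootTuple (r : Rel X) (rs : Multiset X) : Prop :=
  rs.Nodup ∧ ∀ x, x ∈ rs ↔ IsMaxEl r x

/-- Independent map of forests: `φ(r̲_F)·e̲ ≤ r̲_{F'}` for some tuple `e̲`. -/
def Independent (r : Rel X) (r' : Rel Y) (φ : X → Y) : Prop :=
  ∃ (rs : Multiset X) (rs' : Multiset Y) (es : Multiset Y),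
    IsRootTuple r rs ∧ IsRootTuple r' rs' ∧ tupleLE r' (rs.map φ + es) rs'

/-- The (pre-)broad relation generated by a set of generating relations:
closure under reflexivity and broad transitivity. -/
inductive GenRel (gen : Rel X) : Rel X
  | of : ∀ fs e, gen fs e → GenRel gen fs e
  | refl : ∀ e, GenRel gen {e} e
  | btrans : ∀ (p : Multiset (Multiset X × X)) (e : X),
      GenRel gen (p.map Prod.snd) e → (∀ q ∈ p, GenRel gen q.1 q.2) →
      GenRel gen ((p.map Prod.fst).sum) e

/-- Generators of the tensor product `S ⊗ T`: relations `s̲ × t ≤ (s,t)` and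
`s × t̲ ≤ (s,t)`. -/
def tensorGen (rS : Rel A) (rT : Rel B) : Rel (A × B) := fun xs x =>
  (∃ as, rS as x.1 ∧ xs = as.map fun a => (a, x.2)) ∨
  (∃ bs, rT bs x.2 ∧ xs = bs.map fun b => (x.1, b))

/-- The tensor product broad relation on `A × B`. -/
def tensorRel (rS : Rel A) (rT : Rel B) : Rel (A × B) := GenRel (tensorGen rS rT)

/-- Product of tuples: all pairs from `as` and `bs`. -/
def mprod (as : Multiset A) (bs : Multiset B) : Multiset (A × B) :=
  as.bind fun a => bs.map fun b => (a, b)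

end BroadPaper

namespace BroadPaper

/-- The support (edge set) of a broad relation: elements related to
themselves. -/
def support {X : Type u} (r : Rel X) : Set X := {x | r {x} x}

/-- A tree structure supported on a subset of `X`: a relation whose support
carries the axioms of a dendroidally ordered set. -/
def IsTreeOn {X : Type u} (r : Rel X) : Prop :=
  (∀ fs e, r fs e → e ∈ support r ∧ ∀ f ∈ fs, f ∈ support r) ∧
  BTrans r ∧
  (∀ e f, r {e} f → r {f} e → e = f) ∧
  Simple r ∧
  (∀ e ∈ support r, IsLeaf r e ∨ ∃ fs, upTuple r e fs) ∧
  (∃ rt ∈ support r, ∀ e ∈ support r, descends r e rt) ∧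
  (support r).Finite

/-- An elementary subtree of `S ⊗ T`: a subtree all of whose vertices
(generating relations) are `e^{↑S} ≤ e` or `e^{↑T} ≤ e`. -/
def IsElemSubtree {A B : Type u} (rS : Rel A) (rT : Rel B)
    (r₀ : Rel (A × B)) : Prop :=
  IsTreeOn r₀ ∧ (∀ fs e, r₀ fs e → tensorRel rS rT fs e) ∧
  ∀ e fs, upTuple r₀ e fs →
    ((∃ ss, upTuple rS e.1 ss ∧ fs = ss.map fun a => (a, e.2)) ∨
     (∃ ts, upTuple rT e.2 ts ∧ fs = ts.map fun b => (e.1, b)))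

/-- The generating step of the `≤_lex` order: `U` is obtained from `V` by
replacing, at an edge `e`, the configuration `e^{↑S,T} ≤ e^{↑S} ≤ e`
occurring in `V` by the configuration `e^{↑S,T} ≤ e^{↑T} ≤ e` occurring in
`U`, leaving everything else unchanged. -/
def LexStep {A B : Type u} (rS : Rel A) (rT : Rel B)
    (V U : Rel (A × B)) : Prop :=
  ∃ (e : A × B) (ss : Multiset A) (ts : Multiset B),
    upTuple rS e.1 ss ∧ upTuple rT e.2 ts ∧
    -- `V` contains `e^{↑S,T} ≤ e^{↑S} ≤ e`
    upTuple V e (ss.map fun a => (a, e.2)) ∧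
    (∀ a ∈ ss, upTuple V (a, e.2) (ts.map fun b => (a, b))) ∧
    -- `U` contains `e^{↑S,T} ≤ e^{↑T} ≤ e`
    upTuple U e (ts.map fun b => (e.1, b)) ∧
    (∀ b ∈ ts, upTuple U (e.1, b) (ss.map fun a => (a, b))) ∧
    -- the intermediate layers are genuinely replaced
    (∀ a ∈ ss, ((a, e.2) : A × B) ∉ support U) ∧
    (∀ b ∈ ts, ((e.1, b) : A × B) ∉ support V) ∧
    -- edge sets agree away from the replaced intermediate layers
    (∀ x : A × B, x ∉ ss.map (fun a => (a, e.2)) →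
      x ∉ ts.map (fun b => (e.1, b)) → (x ∈ support V ↔ x ∈ support U)) ∧
    -- vertices agree at all other edges
    (∀ (x : A × B) (fs : Multiset (A × B)), x ≠ e →
      x ∉ ss.map (fun a => (a, e.2)) → x ∉ ts.map (fun b => (e.1, b)) →
      (upTuple V x fs ↔ upTuple U x fs))

/-! ### Auxiliary lemmas for Statement 19 -/

section Aux

attribute [local instance 10] Classical.propDecidable

variable {X : Type u} {A : Type u} {B : Type u}

theorem mem_msum {z : X} {s : Multiset (Multiset X)} (h : z ∈ s.sum) :
    ∃ m ∈ s, z ∈ m := by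
  induction s using Multiset.induction with
  | empty => simp at h
  | cons a t ih =>
    rw [Multiset.sum_cons] at h
    rcases Multiset.mem_add.1 h with h | h
    · exact ⟨a, Multiset.mem_cons_self _ _, h⟩
    · obtain ⟨m, hm, hz⟩ := ih h
      exact ⟨m, Multiset.mem_cons_of_mem hm, hz⟩

theorem tupleLE_descend {r : Rel X} {fs gs : Multiset X} (h : tupleLE r fs gs)
    {z : X} (hz : z ∈ fs) : ∃ w ∈ gs, descends r z w := by
  obtain ⟨p, hsnd, hfst, hall⟩ := h
  rw [← hfst] at hz
  obtain ⟨m, hm, hzm⟩ := mem_msum hz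
  obtain ⟨q, hq, rfl⟩ := Multiset.mem_map.1 hm
  exact ⟨q.2, hsnd ▸ Multiset.mem_map_of_mem _ hq, ⟨q.1, hall q hq, hzm⟩⟩

theorem descends_refl {r : Rel X} (hrefl : ∀ e, r {e} e) (e : X) :
    descends r e e :=
  ⟨{e}, hrefl e, Multiset.mem_singleton_self e⟩

theorem btrans_graft {r : Rel X} (hbt : BTrans r) {gs : Multiset X} {e g : X}
    (hgs : r gs e) (hg : g ∈ gs) {fs : Multiset X} (hfs : r fs g)
    (hrefl : ∀ x ∈ gs.erase g, r {x} x) : r (fs + gs.erase g) e := by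
  set p : Multiset (Multiset X × X) :=
    (fs, g) ::ₘ (gs.erase g).map (fun x => (({x} : Multiset X), x)) with hp
  have hsnd : p.map Prod.snd = gs := by
    simp only [hp, Multiset.map_cons, Multiset.map_map, Function.comp]
    rw [Multiset.map_id']
    exact Multiset.cons_erase hg
  have hfst : (p.map Prod.fst).sum = fs + gs.erase g := by
    simp only [hp, Multiset.map_cons, Multiset.map_map, Function.comp,
      Multiset.sum_cons, Multiset.sum_map_singleton]
  have := hbt p e (hsnd ▸ hgs) ?_
  · rwa [hfst] at this
  · intro q hq
    rcases Multiset.mem_cons.1 hq with rfl | hq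
    · exact hfs
    · obtain ⟨x, hx, rfl⟩ := Multiset.mem_map.1 hq
      exact hrefl x hx

theorem descends_trans {r : Rel X} (hbt : BTrans r) (hrefl : ∀ e, r {e} e)
    {f g e : X} (h1 : descends r f g) (h2 : descends r g e) :
    descends r f e := by
  obtain ⟨fs, hfs, hf⟩ := h1
  obtain ⟨gs, hgs, hg⟩ := h2
  exact ⟨fs + gs.erase g, btrans_graft hbt hgs hg hfs (fun x _ => hrefl x),
    Multiset.mem_add.2 (Or.inl hf)⟩

/-- If `e ∈ fs`, `r fs e` and `fs ≠ {e}`, simplicity is violated. -/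
theorem self_mem_rel {r : Rel X} (hbt : BTrans r) (hrefl : ∀ e, r {e} e)
    (hsimp : Simple r) {e : X} {fs : Multiset X} (hr : r fs e)
    (hne : fs ≠ ({e} : Multiset X)) (he : e ∈ fs) : False := by
  have hrest : fs.erase e ≠ 0 := by
    intro h0
    apply hne
    rw [← Multiset.cons_erase he, h0]
    rfl
  obtain ⟨z, hz⟩ := Multiset.exists_mem_of_ne_zero hrest
  have hbig : r (fs + fs.erase e) e := btrans_graft hbt hr he hr (fun x _ => hrefl x)
  have hnd := hsimp _ _ hbig
  rw [Multiset.nodup_add] at hnd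
  exact Multiset.disjoint_left.1 hnd.2.2 (Multiset.mem_of_mem_erase hz) hz

theorem descends_antisymm {r : Rel X} (hb : IsBroad r) (hsimp : Simple r)
    {e f : X} (h1 : descends r f e) (h2 : descends r e f) : e = f := by
  obtain ⟨fs, hfs, hf⟩ := h1
  obtain ⟨es, hes, he⟩ := h2
  have hrefl := hb.1.1
  have hbt := hb.1.2
  have hhs : r (es + fs.erase f) e := btrans_graft hbt hfs hf hes (fun x _ => hrefl x)
  have hemem : e ∈ es + fs.erase f := Multiset.mem_add.2 (Or.inl he)
  by_cases hcase : es + fs.erase f = ({e} : Multiset X)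
  · -- then `es = {e}` and `fs = {f}`
    have hc : es.card + (fs.erase f).card = 1 := by
      have h := congrArg Multiset.card hcase
      rw [Multiset.card_add, Multiset.card_singleton] at h
      exact h
    have hes0 : es.card ≠ 0 := by
      intro h0
      rw [Multiset.card_eq_zero] at h0
      rw [h0] at he; simp at he
    have hfe0 : fs.erase f = 0 := by
      rw [← Multiset.card_eq_zero]; omega
    have hes1 : es = ({e} : Multiset X) := by
      obtain ⟨x, hx⟩ := Multiset.card_eq_one.1 (show es.card = 1 by omega)
      rw [hx] at he ⊢
      rw [Multiset.mem_singleton] at he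
      rw [he]
    have hfs1 : fs = ({f} : Multiset X) := by
      have := Multiset.cons_erase hf
      rw [hfe0] at this
      exact this.symm
    rw [hes1] at hes
    rw [hfs1] at hfs
    exact hb.2 e f hes hfs
  · exact absurd (self_mem_rel hbt hrefl hsimp hhs hcase hemem) not_false

/-- No element descends two distinct members of one tuple (simplicity). -/
theorem descends_two_mem {r : Rel X} (hbt : BTrans r) (hrefl : ∀ e, r {e} e)
    (hsimp : Simple r) {fs : Multiset X} {y a a' x : X}
    (hr : r fs y) (ha : a ∈ fs) (ha' : a' ∈ fs.erase a)
    (h1 : descends r x a) (h2 : descends r x a') : False := by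
  obtain ⟨gs, hgs, hxg⟩ := h1
  obtain ⟨gs', hgs', hxg'⟩ := h2
  set rest := (fs.erase a).erase a' with hrest
  set p : Multiset (Multiset X × X) :=
    (gs, a) ::ₘ (gs', a') ::ₘ rest.map (fun z => (({z} : Multiset X), z)) with hp
  have hsnd : p.map Prod.snd = fs := by
    simp only [hp, Multiset.map_cons, Multiset.map_map, Function.comp]
    rw [Multiset.map_id']
    rw [Multiset.cons_erase ha', Multiset.cons_erase ha]
  have hfst : (p.map Prod.fst).sum = gs + (gs' + rest) := by
    simp only [hp, Multiset.map_cons, Multiset.map_map, Function.comp,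
      Multiset.sum_cons, Multiset.sum_map_singleton]
  have hall : ∀ q ∈ p, r q.1 q.2 := by
    intro q hq
    rcases Multiset.mem_cons.1 hq with rfl | hq
    · exact hgs
    rcases Multiset.mem_cons.1 hq with rfl | hq
    · exact hgs'
    obtain ⟨z, hz, rfl⟩ := Multiset.mem_map.1 hq
    exact hrefl z
  have hbig := hbt p y (hsnd ▸ hr) hall
  rw [hfst] at hbig
  have hnd := hsimp _ _ hbig
  rw [Multiset.nodup_add] at hnd
  exact Multiset.disjoint_left.1 hnd.2.2 hxg (Multiset.mem_add.2 (Or.inl hxg'))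

/-- An element cannot descend a member of its own up-tuple. -/
theorem not_descends_of_mem_upTuple {r : Rel X} (ht : IsTree r)
    {e b : X} {fs : Multiset X} (h : upTuple r e fs) (hb : b ∈ fs)
    (hd : descends r e b) : False := by
  have hbe : descends r b e := ⟨fs, h.1.1, hb⟩
  have heb : e = b := descends_antisymm ht.1 ht.2.2.1 hbe hd
  exact self_mem_rel ht.1.1.2 ht.1.1.1 ht.2.2.1 h.1.1 h.1.2 (heb ▸ hb)

/-- Coordinatewise descent in the tensor product. -/
theorem tensor_descends {rS : Rel A} {rT : Rel B} (hS : IsTree rS) (hT : IsTree rT)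
    {fs : Multiset (A × B)} {e : A × B} (h : tensorRel rS rT fs e) :
    ∀ f ∈ fs, descends rS f.1 e.1 ∧ descends rT f.2 e.2 := by
  have hreflS := hS.1.1.1
  have hreflT := hT.1.1.1
  induction h with
  | of fs e hg =>
    intro f hf
    rcases hg with ⟨as, has, rfl⟩ | ⟨bs, hbs, rfl⟩
    · obtain ⟨a, ha, rfl⟩ := Multiset.mem_map.1 hf
      exact ⟨⟨as, has, ha⟩, descends_refl hreflT _⟩
    · obtain ⟨b, hb, rfl⟩ := Multiset.mem_map.1 hf
      exact ⟨descends_refl hreflS _, ⟨bs, hbs, hb⟩⟩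
  | refl e =>
    intro f hf
    rw [Multiset.mem_singleton] at hf
    subst hf
    exact ⟨descends_refl hreflS _, descends_refl hreflT _⟩
  | btrans p e h1 h2 ih1 ih2 =>
    intro f hf
    obtain ⟨m, hm, hfm⟩ := mem_msum hf
    obtain ⟨q, hq, rfl⟩ := Multiset.mem_map.1 hm
    have hin := ih2 q hq f hfm
    have hout := ih1 q.2 (Multiset.mem_map_of_mem _ hq)
    exact ⟨descends_trans hS.1.1.2 hreflS hin.1 hout.1,
      descends_trans hT.1.1.2 hreflT hin.2 hout.2⟩

theorem descends_tensor {rS : Rel A} {rT : Rel B} (hS : IsTree rS) (hT : IsTree rT)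
    {f e : A × B} (h : descends (tensorRel rS rT) f e) :
    descends rS f.1 e.1 ∧ descends rT f.2 e.2 := by
  obtain ⟨fs, h1, h2⟩ := h
  exact tensor_descends hS hT h1 f h2

theorem upTuple_ne_zero {X : Type u} {r : Rel X} (ho : ∀ e, ¬ IsStump r e)
    {e : X} {fs : Multiset X} (h : upTuple r e fs) : fs ≠ 0 := by
  intro h0
  exact ho e (show upTuple r e 0 by rw [← h0]; exact h)

/-- Clash: a tuple of the `S`-form below `x` cannot sit below an up-tuple of
the `T`-form at `x`. -/
theorem s_form_clash {rS : Rel A} {rT : Rel B} (hS : IsTree rS) (hT : IsTree rT)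
    {V : Rel (A × B)} (hVt : ∀ fs e, V fs e → tensorRel rS rT fs e)
    {x : A × B} {ss : Multiset A} {ts' : Multiset B}
    (hss0 : ss ≠ 0)
    (hrel : V (ss.map fun a => (a, x.2)) x)
    (hne : (ss.map fun a => (a, x.2)) ≠ ({x} : Multiset (A × B)))
    (hts' : upTuple rT x.2 ts')
    (htup : upTuple V x (ts'.map fun b => (x.1, b))) : False := by
  have hle := htup.2 _ hrel hne
  obtain ⟨a, ha⟩ := Multiset.exists_mem_of_ne_zero hss0
  obtain ⟨w, hw, hdw⟩ := tupleLE_descend hle (Multiset.mem_map_of_mem _ ha)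
  obtain ⟨b, hb, rfl⟩ := Multiset.mem_map.1 hw
  obtain ⟨fs, hfs, hmem⟩ := hdw
  have hd := tensor_descends hS hT (hVt _ _ hfs) _ hmem
  exact not_descends_of_mem_upTuple hT hts' hb hd.2

/-- Clash, the other way round. -/
theorem t_form_clash {rS : Rel A} {rT : Rel B} (hS : IsTree rS) (hT : IsTree rT)
    {V : Rel (A × B)} (hVt : ∀ fs e, V fs e → tensorRel rS rT fs e)
    {x : A × B} {ts : Multiset B} {ss' : Multiset A}
    (hts0 : ts ≠ 0)
    (hrel : V (ts.map fun b => (x.1, b)) x)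
    (hne : (ts.map fun b => (x.1, b)) ≠ ({x} : Multiset (A × B)))
    (hss' : upTuple rS x.1 ss')
    (htup : upTuple V x (ss'.map fun a => (a, x.2))) : False := by
  have hle := htup.2 _ hrel hne
  obtain ⟨b, hb⟩ := Multiset.exists_mem_of_ne_zero hts0
  obtain ⟨w, hw, hdw⟩ := tupleLE_descend hle (Multiset.mem_map_of_mem _ hb)
  obtain ⟨a, ha, rfl⟩ := Multiset.mem_map.1 hw
  obtain ⟨fs, hfs, hmem⟩ := hdw
  have hd := tensor_descends hS hT (hVt _ _ hfs) _ hmem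
  exact not_descends_of_mem_upTuple hS hss' ha hd.1

/-- `S`-vertices of an elementary subtree. -/
def SVert (rS : Rel A) (V : Rel (A × B)) (x : A × B) : Prop :=
  ∃ ss : Multiset A, upTuple rS x.1 ss ∧ upTuple V x (ss.map fun a => (a, x.2))

/-- `T`-vertices of an elementary subtree. -/
def TVert (rT : Rel B) (V : Rel (A × B)) (x : A × B) : Prop :=
  ∃ ts : Multiset B, upTuple rT x.2 ts ∧ upTuple V x (ts.map fun b => (x.1, b))

/-- The counted set: pairs of an `S`-vertex coordinatewise below a
`T`-vertex. -/
def pairsSet (rS : Rel A) (rT : Rel B) (V : Rel (A × B)) :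
    Set ((A × B) × (A × B)) :=
  {p | SVert rS V p.1 ∧ TVert rT V p.2 ∧
    descends rS p.1.1 p.2.1 ∧ descends rT p.1.2 p.2.2}

/-- The counting function `g`. -/
noncomputable def gcount (rS : Rel A) (rT : Rel B) (V : Rel (A × B)) : ℕ :=
  (pairsSet rS rT V).ncard

theorem SVert_support {rS : Rel A} {V : Rel (A × B)} (hV : IsTreeOn V)
    {x : A × B} (h : SVert rS V x) : x ∈ support V := by
  obtain ⟨ss, _, hup⟩ := h
  exact (hV.1 _ _ hup.1.1).1

theorem TVert_support {rT : Rel B} {V : Rel (A × B)} (hV : IsTreeOn V)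
    {x : A × B} (h : TVert rT V x) : x ∈ support V := by
  obtain ⟨ts, _, hup⟩ := h
  exact (hV.1 _ _ hup.1.1).1

theorem vert_disjoint {rS : Rel A} {rT : Rel B} (hS : IsTree rS) (hT : IsTree rT)
    (hoS : ∀ a, ¬ IsStump rS a) {V : Rel (A × B)}
    (hV : IsElemSubtree rS rT V) {x : A × B}
    (h1 : SVert rS V x) (h2 : TVert rT V x) : False := by
  obtain ⟨ss, hss, hup⟩ := h1
  obtain ⟨ts, hts, hupT⟩ := h2
  have hss0 : ss ≠ 0 := upTuple_ne_zero hoS hss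
  exact s_form_clash hS hT hV.2.1 hss0 hup.1.1 hup.1.2 hts hupT

theorem SVert_mono {rS : Rel A} {rT : Rel B} (hS : IsTree rS) (hT : IsTree rT)
    (hoS : ∀ a, ¬ IsStump rS a) {V U : Rel (A × B)}
    (hV : IsElemSubtree rS rT V) (hU : IsElemSubtree rS rT U)
    (hVU : ∀ fs e, V fs e → U fs e) {x : A × B}
    (h : SVert rS V x) : SVert rS U x := by
  obtain ⟨ss, hss, hup⟩ := h
  have hUm : U (ss.map fun a => (a, x.2)) x := hVU _ _ hup.1.1
  have hxs : x ∈ support U := hVU _ _ (hV.1.1 _ _ hup.1.1).1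
  have hnl : ¬ IsLeaf U x := fun hl => hl ⟨_, hUm, hup.1.2⟩
  obtain ⟨gs, hgs⟩ := (hU.1.2.2.2.2.1 x hxs).resolve_left hnl
  rcases hU.2.2 x gs hgs with ⟨ss', hss', rfl⟩ | ⟨ts', hts', rfl⟩
  · exact ⟨ss', hss', hgs⟩
  · exact absurd (s_form_clash hS hT hU.2.1
      (upTuple_ne_zero hoS hss) hUm hup.1.2 hts' hgs) not_false

theorem TVert_mono {rS : Rel A} {rT : Rel B} (hS : IsTree rS) (hT : IsTree rT)
    (hoT : ∀ b, ¬ IsStump rT b) {V U : Rel (A × B)}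
    (hV : IsElemSubtree rS rT V) (hU : IsElemSubtree rS rT U)
    (hVU : ∀ fs e, V fs e → U fs e) {x : A × B}
    (h : TVert rT V x) : TVert rT U x := by
  obtain ⟨ts, hts, hup⟩ := h
  have hUm : U (ts.map fun b => (x.1, b)) x := hVU _ _ hup.1.1
  have hxs : x ∈ support U := hVU _ _ (hV.1.1 _ _ hup.1.1).1
  have hnl : ¬ IsLeaf U x := fun hl => hl ⟨_, hUm, hup.1.2⟩
  obtain ⟨gs, hgs⟩ := (hU.1.2.2.2.2.1 x hxs).resolve_left hnl
  rcases hU.2.2 x gs hgs with ⟨ss', hss', rfl⟩ | ⟨ts', hts', rfl⟩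
  · exact absurd (t_form_clash hS hT hU.2.1
      (upTuple_ne_zero hoT hts) hUm hup.1.2 hss' hgs) not_false
  · exact ⟨ts', hts', hgs⟩

theorem pairsSet_mono {rS : Rel A} {rT : Rel B} (hS : IsTree rS) (hT : IsTree rT)
    (hoS : ∀ a, ¬ IsStump rS a) (hoT : ∀ b, ¬ IsStump rT b)
    {V U : Rel (A × B)} (hV : IsElemSubtree rS rT V) (hU : IsElemSubtree rS rT U)
    (hVU : ∀ fs e, V fs e → U fs e) :
    pairsSet rS rT V ⊆ pairsSet rS rT U := by
  rintro ⟨x, y⟩ ⟨h1, h2, h3, h4⟩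
  exact ⟨SVert_mono hS hT hoS hV hU hVU h1, TVert_mono hS hT hoT hV hU hVU h2, h3, h4⟩

theorem pairsSet_finite {rS : Rel A} {rT : Rel B} {V : Rel (A × B)}
    (hV : IsTreeOn V) : (pairsSet rS rT V).Finite := by
  apply Set.Finite.subset (hV.2.2.2.2.2.2.prod hV.2.2.2.2.2.2)
  rintro ⟨x, y⟩ ⟨h1, h2, _, _⟩
  exact ⟨SVert_support hV h1, TVert_support hV h2⟩

theorem gcount_mono {rS : Rel A} {rT : Rel B} (hS : IsTree rS) (hT : IsTree rT)
    (hoS : ∀ a, ¬ IsStump rS a) (hoT : ∀ b, ¬ IsStump rT b)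
    {V U : Rel (A × B)} (hV : IsElemSubtree rS rT V) (hU : IsElemSubtree rS rT U)
    (hVU : ∀ fs e, V fs e → U fs e) :
    gcount rS rT V ≤ gcount rS rT U :=
  Set.ncard_le_ncard (pairsSet_mono hS hT hoS hoT hV hU hVU) (pairsSet_finite hU.1)

theorem lex_gt {rS : Rel A} {rT : Rel B} (hS : IsTree rS) (hT : IsTree rT)
    (hoS : ∀ a, ¬ IsStump rS a) (hoT : ∀ b, ¬ IsStump rT b)
    {V U : Rel (A × B)} (hV : IsElemSubtree rS rT V) (hU : IsElemSubtree rS rT U)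
    (h : LexStep rS rT V U) : gcount rS rT V < gcount rS rT U := by
  classical
  obtain ⟨e, ss, ts, hss, hts, hVe, hVa, hUe, hUb, hUnot, hVnot, hsupp, hvert⟩ := h
  have hreflS := hS.1.1.1
  have hreflT := hT.1.1.1
  have hts0 : ts ≠ 0 := upTuple_ne_zero hoT hts
  obtain ⟨b₀, hb₀⟩ := Multiset.exists_mem_of_ne_zero hts0
  -- vertices provided by the interchange data
  have hSVe : SVert rS V e := ⟨ss, hss, hVe⟩
  have hTVa : ∀ a ∈ ss, TVert rT V (a, e.2) := fun a ha => ⟨ts, hts, hVa a ha⟩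
  have hTUe : TVert rT U e := ⟨ts, hts, hUe⟩
  have hSUb : ∀ b ∈ ts, SVert rS U (e.1, b) := fun b hb => ⟨ss, hss, hUb b hb⟩
  -- exclusions
  have hSnotL : ∀ {x : A × B}, SVert rS V x → x ∉ ss.map (fun a => (a, e.2)) := by
    intro x hx hmem
    obtain ⟨a, ha, rfl⟩ := Multiset.mem_map.1 hmem
    exact vert_disjoint hS hT hoS hV hx (hTVa a ha)
  have hSnotR : ∀ {x : A × B}, SVert rS V x → x ∉ ts.map (fun b => (e.1, b)) := by
    intro x hx hmem
    obtain ⟨b, hb, rfl⟩ := Multiset.mem_map.1 hmem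
    exact hVnot b hb (SVert_support hV.1 hx)
  have hTnotR : ∀ {y : A × B}, TVert rT V y → y ∉ ts.map (fun b => (e.1, b)) := by
    intro y hy hmem
    obtain ⟨b, hb, rfl⟩ := Multiset.mem_map.1 hmem
    exact hVnot b hb (TVert_support hV.1 hy)
  have hTne : ∀ {y : A × B}, TVert rT V y → y ≠ e := by
    intro y hy hye
    subst hye
    exact vert_disjoint hS hT hoS hV hSVe hy
  have hSsupp : ∀ {x : A × B}, SVert rS V x → x ≠ (e.1, b₀) := by
    intro x hx hxx
    subst hxx
    exact hVnot b₀ hb₀ (SVert_support hV.1 hx)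
  -- transfers of vertices outside the replaced region
  have htransS : ∀ {x : A × B}, x ≠ e → x ∉ ss.map (fun a => (a, e.2)) →
      x ∉ ts.map (fun b => (e.1, b)) → SVert rS V x → SVert rS U x := by
    rintro x h1 h2 h3 ⟨s', hs', hu⟩
    exact ⟨s', hs', (hvert x _ h1 h2 h3).1 hu⟩
  have htransT : ∀ {y : A × B}, y ≠ e → y ∉ ss.map (fun a => (a, e.2)) →
      y ∉ ts.map (fun b => (e.1, b)) → TVert rT V y → TVert rT U y := by
    rintro y h1 h2 h3 ⟨t', ht', hu⟩
    exact ⟨t', ht', (hvert y _ h1 h2 h3).1 hu⟩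
  set pt : (A × B) × (A × B) := ((e.1, b₀), e) with hpt
  have hptU : pt ∈ pairsSet rS rT U :=
    ⟨hSUb b₀ hb₀, hTUe, descends_refl hreflS e.1, ⟨ts, hts.1.1, hb₀⟩⟩
  set F : (A × B) × (A × B) → (A × B) × (A × B) := fun p =>
    if p.1 = e then ((e.1, b₀), p.2)
    else if p.2 ∈ ss.map (fun a => (a, e.2)) then (p.1, e) else p with hFdef
  have hF1 : ∀ x y : A × B, x = e → F (x, y) = ((e.1, b₀), y) := by
    intro x y hx; simp [hFdef, hx]
  have hF2 : ∀ x y : A × B, x ≠ e → y ∈ ss.map (fun a => (a, e.2)) →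
      F (x, y) = (x, e) := by
    intro x y hx hy
    simp only [hFdef]
    rw [if_neg hx, if_pos hy]
  have hF3 : ∀ x y : A × B, x ≠ e → y ∉ ss.map (fun a => (a, e.2)) →
      F (x, y) = (x, y) := by
    intro x y hx hy
    simp only [hFdef]
    rw [if_neg hx, if_neg hy]
  have hmaps : ∀ p ∈ pairsSet rS rT V, F p ∈ pairsSet rS rT U \ {pt} := by
    rintro ⟨x, y⟩ ⟨hpS, hpT, hd1, hd2⟩
    have hyne : y ≠ e := hTne hpT
    have hyR : y ∉ ts.map (fun b => (e.1, b)) := hTnotR hpT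
    by_cases hxe : x = e
    · rw [hxe] at hd1 hd2
      have hyL : y ∉ ss.map (fun a => (a, e.2)) := by
        intro hmem
        obtain ⟨a, ha, rfl⟩ := Multiset.mem_map.1 hmem
        exact not_descends_of_mem_upTuple hS hss ha hd1
      rw [hF1 x y hxe]
      refine ⟨⟨hSUb b₀ hb₀, htransT hyne hyL hyR hpT, hd1, ?_⟩, ?_⟩
      · exact descends_trans hT.1.1.2 hreflT ⟨ts, hts.1.1, hb₀⟩ hd2
      · intro hmem
        rw [Set.mem_singleton_iff, hpt] at hmem
        exact hyne (congrArg Prod.snd hmem)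
    · have hxL : x ∉ ss.map (fun a => (a, e.2)) := hSnotL hpS
      have hxR : x ∉ ts.map (fun b => (e.1, b)) := hSnotR hpS
      have hSU : SVert rS U x := htransS hxe hxL hxR hpS
      by_cases hyL : y ∈ ss.map (fun a => (a, e.2))
      · obtain ⟨a, ha, rfl⟩ := Multiset.mem_map.1 hyL
        rw [hF2 x _ hxe hyL]
        refine ⟨⟨hSU, hTUe, ?_, hd2⟩, ?_⟩
        · exact descends_trans hS.1.1.2 hreflS hd1 ⟨ss, hss.1.1, ha⟩
        · intro hmem
          rw [Set.mem_singleton_iff, hpt] at hmem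
          exact hSsupp hpS (congrArg Prod.fst hmem)
      · rw [hF3 x y hxe hyL]
        refine ⟨⟨hSU, htransT hyne hyL hyR hpT, hd1, hd2⟩, ?_⟩
        intro hmem
        rw [Set.mem_singleton_iff, hpt] at hmem
        exact hyne (congrArg Prod.snd hmem)
  have hinj : Set.InjOn F (pairsSet rS rT V) := by
    rintro ⟨x, y⟩ ⟨hpS, hpT, hd1, hd2⟩ ⟨x', y'⟩ ⟨hpS', hpT', hd1', hd2'⟩ heq
    have hyne : y ≠ e := hTne hpT
    have hyne' : y' ≠ e := hTne hpT'
    by_cases hxe : x = e <;> by_cases hxe' : x' = e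
    · rw [hF1 x y hxe, hF1 x' y' hxe'] at heq
      have h2 : y = y' := congrArg Prod.snd heq
      rw [hxe, hxe', h2]
    · rw [hF1 x y hxe] at heq
      exfalso
      by_cases hyL' : y' ∈ ss.map (fun a => (a, e.2))
      · rw [hF2 x' y' hxe' hyL'] at heq
        exact hSsupp hpS' (congrArg Prod.fst heq).symm
      · rw [hF3 x' y' hxe' hyL'] at heq
        exact hSsupp hpS' (congrArg Prod.fst heq).symm
    · rw [hF1 x' y' hxe'] at heq
      exfalso
      by_cases hyL : y ∈ ss.map (fun a => (a, e.2))
      · rw [hF2 x y hxe hyL] at heq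
        exact hSsupp hpS (congrArg Prod.fst heq)
      · rw [hF3 x y hxe hyL] at heq
        exact hSsupp hpS (congrArg Prod.fst heq)
    · by_cases hyL : y ∈ ss.map (fun a => (a, e.2)) <;>
        by_cases hyL' : y' ∈ ss.map (fun a => (a, e.2))
      · obtain ⟨a, ha, hay⟩ := Multiset.mem_map.1 hyL
        obtain ⟨a', ha', hay'⟩ := Multiset.mem_map.1 hyL'
        rw [hF2 x y hxe hyL, hF2 x' y' hxe' hyL'] at heq
        have hxx : x = x' := congrArg Prod.fst heq
        have haa : a = a' := by
          by_contra hne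
          have ha'' : a' ∈ ss.erase a :=
            (Multiset.mem_erase_of_ne (Ne.symm hne)).2 ha'
          have d1 : descends rS x.1 a := by rw [← hay] at hd1; exact hd1
          have d2 : descends rS x.1 a' := by
            rw [← hay'] at hd1'; rw [hxx]; exact hd1'
          exact descends_two_mem hS.1.1.2 hreflS hS.2.2.1 hss.1.1 ha ha'' d1 d2
        have hyy : y = y' := by rw [← hay, ← hay', haa]
        rw [hxx, hyy]
      · rw [hF2 x y hxe hyL, hF3 x' y' hxe' hyL'] at heq
        exact absurd (congrArg Prod.snd heq).symm hyne'
      · rw [hF3 x y hxe hyL, hF2 x' y' hxe' hyL'] at heq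
        exact absurd (congrArg Prod.snd heq) hyne
      · rw [hF3 x y hxe hyL, hF3 x' y' hxe' hyL'] at heq
        exact heq
  have hfinU : (pairsSet rS rT U).Finite := pairsSet_finite hU.1
  have hle : gcount rS rT V ≤ (pairsSet rS rT U \ {pt}).ncard :=
    Set.ncard_le_ncard_of_injOn F hmaps hinj hfinU.diff
  have hlt : (pairsSet rS rT U \ {pt}).ncard < gcount rS rT U :=
    Set.ncard_lt_ncard (Set.sdiff_singleton_ssubset.2 hptU) hfinU
  exact lt_of_le_of_lt hle hlt

end Aux

/-- For open trees `S`, `T`, the relation `≤_lex` generated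
by the interchange steps is a partial order on the set of elementary
subtrees of `S ⊗ T`, and so is the relation generated jointly by `≤_lex`
and subtree inclusion. -/
theorem stmt19 {A B : Type u} (rS : Rel A) (rT : Rel B)
    (hS : IsTree rS) (hT : IsTree rT)
    (hoS : ∀ a, ¬ IsStump rS a) (hoT : ∀ b, ¬ IsStump rT b) :
    IsPartialOrder {r₀ : Rel (A × B) // IsElemSubtree rS rT r₀}
      (Relation.ReflTransGen fun V U => LexStep rS rT V.val U.val) ∧
    IsPartialOrder {r₀ : Rel (A × B) // IsElemSubtree rS rT r₀}
      (Relation.ReflTransGen fun V U =>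
        LexStep rS rT V.val U.val ∨ ∀ fs e, V.val fs e → U.val fs e) := by
  classical
  have key1 : ∀ V U : {r₀ : Rel (A × B) // IsElemSubtree rS rT r₀},
      Relation.ReflTransGen (fun V U => LexStep rS rT V.val U.val) V U →
      V = U ∨ gcount rS rT V.val < gcount rS rT U.val := by
    intro V U h
    induction h with
    | refl => exact Or.inl rfl
    | @tail W Z h1 h2 ih =>
      have hg := lex_gt hS hT hoS hoT W.2 Z.2 h2
      rcases ih with rfl | hlt
      · exact Or.inr hg
      · exact Or.inr (lt_trans hlt hg)
  have key2 : ∀ V U : {r₀ : Rel (A × B) // IsElemSubtree rS rT r₀},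
      Relation.ReflTransGen (fun V U =>
        LexStep rS rT V.val U.val ∨ ∀ fs e, V.val fs e → U.val fs e) V U →
      gcount rS rT V.val < gcount rS rT U.val ∨
        ∀ fs e, V.val fs e → U.val fs e := by
    intro V U h
    induction h with
    | refl => exact Or.inr (fun fs e h => h)
    | @tail W Z h1 h2 ih =>
      rcases h2 with hlex | hincl
      · have hg := lex_gt hS hT hoS hoT W.2 Z.2 hlex
        left
        rcases ih with hlt | hsub
        · exact lt_trans hlt hg
        · exact lt_of_le_of_lt (gcount_mono hS hT hoS hoT V.2 W.2 hsub) hg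
      · rcases ih with hlt | hsub
        · exact Or.inl
            (lt_of_lt_of_le hlt (gcount_mono hS hT hoS hoT W.2 Z.2 hincl))
        · exact Or.inr (fun fs e hfe => hincl fs e (hsub fs e hfe))
  constructor
  · exact
      { refl := fun a => Relation.ReflTransGen.refl
        trans := fun a b c h1 h2 => Relation.ReflTransGen.trans h1 h2
        antisymm := by
          intro a b h1 h2
          rcases key1 a b h1 with rfl | hlt1
          · rfl
          rcases key1 b a h2 with rfl | hlt2
          · rfl
          exact absurd (lt_trans hlt1 hlt2) (lt_irrefl _) }
  · exact
      { refl := fun a => Relation.ReflTransGen.refl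
        trans := fun a b c h1 h2 => Relation.ReflTransGen.trans h1 h2
        antisymm := by
          intro a b h1 h2
          rcases key2 a b h1 with hlt1 | hsub1
          · rcases key2 b a h2 with hlt2 | hsub2
            · exact absurd (lt_trans hlt1 hlt2) (lt_irrefl _)
            · exact absurd
                (lt_of_lt_of_le hlt1 (gcount_mono hS hT hoS hoT b.2 a.2 hsub2))
                (lt_irrefl _)
          · rcases key2 b a h2 with hlt2 | hsub2
            · exact absurd
                (lt_of_lt_of_le hlt2 (gcount_mono hS hT hoS hoT a.2 b.2 hsub1))
                (lt_irrefl _)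
            · exact Subtype.ext (funext fun fs => funext fun e =>
                propext ⟨hsub1 fs e, hsub2 fs e⟩) }

end BroadPaper
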